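/- Fix natural numbers b, n and a strictly increasing sequence of integers u_1 < u_2 < ... < u_n with 1 ≤ u_i ≤ b+2n and 2i ≤ u_i for all i. The entries of M_{b,n,u}(a) and of M̄_{b,n,u}(a) are polynomials in a with rational coefficients, and as an identity of polynomials in a (equivalently, for every rational value of a): det M̄_{b,n,u}(a) = det M_{b,n,u}(a − 1/2). (Equivalently, the weighted and unweighted tiling functions satisfy f̄⁺_{b,n,(u_i)}(a) = f⁺_{b,n,(u_i)}(a − 1/2).) -/

import Mathlib

open Polynomial Finset

/-- Generalized binomial coefficient `C(x, k) = (1/k!) · (x-k+1)_k` for `k ≥ 0`,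
and `C(x, k) = 0` for `k < 0`. -/
noncomputable def genBinom (x : ℚ) (k : ℤ) : ℚ :=
  if 0 ≤ k then (ascPochhammer ℚ k.toNat).eval (x - k + 1) / (k.toNat.factorial : ℚ)
  else 0

/-- The path matrix `M_{b,n,u}(a)` of the region `V⁺_{a,b,n,(u_i)}`: the `(i,j)` entry
(1-based) is `C(T(i,j), K(i,j))`, where `T(i,j) = a+n+j`, `K(i,j) = 2j-1-b+i` if
`1 ≤ i ≤ b`, and `T(i,j) = a+u_{i-b}-b-n+j-1`, `K(i,j) = 2j-1-2b-2n+u_{i-b}` if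
`b+1 ≤ i ≤ b+n`.  The dent positions are `u 1, …, u n` (1-based). -/
noncomputable def MMat (b n : ℕ) (u : ℕ → ℤ) (a : ℚ) :
    Matrix (Fin (b + n)) (Fin (b + n)) ℚ := fun i j =>
  if ((i : ℕ) + 1 : ℤ) ≤ (b : ℤ) then
    genBinom (a + (n : ℚ) + (((j : ℕ) : ℚ) + 1))
      (2 * (((j : ℕ) : ℤ) + 1) - 1 - (b : ℤ) + (((i : ℕ) : ℤ) + 1))
  else
    genBinom (a + ((u ((i : ℕ) + 1 - b) : ℤ) : ℚ) - (b : ℚ) - (n : ℚ) + (((j : ℕ) : ℚ) + 1) - 1)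
      (2 * (((j : ℕ) : ℤ) + 1) - 1 - 2 * (b : ℤ) - 2 * (n : ℤ) + u ((i : ℕ) + 1 - b))

/-- The weighted path matrix `M̄_{b,n,u}(a)` of the region `V̄⁺_{a,b,n,(u_i)}`
(vertical lozenges along the eastern boundary have weight `1/2`): the `(i,j)` entry
is `C(T(i,j)-1, K(i,j)) + (1/2)·C(T(i,j)-1, K(i,j)-1)` with `T, K` as in `MMat`. -/
noncomputable def MbarMat (b n : ℕ) (u : ℕ → ℤ) (a : ℚ) :
    Matrix (Fin (b + n)) (Fin (b + n)) ℚ := fun i j =>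
  if ((i : ℕ) + 1 : ℤ) ≤ (b : ℤ) then
    genBinom (a + (n : ℚ) + (((j : ℕ) : ℚ) + 1) - 1)
        (2 * (((j : ℕ) : ℤ) + 1) - 1 - (b : ℤ) + (((i : ℕ) : ℤ) + 1)) +
      (1 / 2) * genBinom (a + (n : ℚ) + (((j : ℕ) : ℚ) + 1) - 1)
        (2 * (((j : ℕ) : ℤ) + 1) - 1 - (b : ℤ) + (((i : ℕ) : ℤ) + 1) - 1)
  else
    genBinom (a + ((u ((i : ℕ) + 1 - b) : ℤ) : ℚ) - (b : ℚ) - (n : ℚ) + (((j : ℕ) : ℚ) + 1) - 1 - 1)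
        (2 * (((j : ℕ) : ℤ) + 1) - 1 - 2 * (b : ℤ) - 2 * (n : ℤ) + u ((i : ℕ) + 1 - b)) +
      (1 / 2) * genBinom
        (a + ((u ((i : ℕ) + 1 - b) : ℤ) : ℚ) - (b : ℚ) - (n : ℚ) + (((j : ℕ) : ℚ) + 1) - 1 - 1)
        (2 * (((j : ℕ) : ℤ) + 1) - 1 - 2 * (b : ℤ) - 2 * (n : ℤ) + u ((i : ℕ) + 1 - b) - 1)

lemma genBinom_neg (x : ℚ) {k : ℤ} (hk : k < 0) : genBinom x k = 0 := by
  simp [genBinom, not_le.2 hk]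

lemma genBinom_eq_choose (x : ℚ) (n : ℕ) : genBinom x (n : ℤ) = Ring.choose x n := by
  rw [genBinom, if_pos (Int.natCast_nonneg n), Int.toNat_natCast]
  have h := Ring.factorial_nsmul_multichoose_eq_ascPochhammer (x - n + 1) n
  rw [Polynomial.ascPochhammer_smeval_eq_eval] at h
  rw [Ring.choose]
  rw [div_eq_iff (by exact_mod_cast n.factorial_ne_zero)]
  push_cast
  rw [← h, nsmul_eq_mul]
  ring

lemma genBinom_zero (x : ℚ) : genBinom x 0 = 1 := by
  simp [genBinom]

-- G1: absorption
lemma genBinom_absorb (x : ℚ) (k : ℤ) :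
    genBinom x k * k = genBinom x (k - 1) * (x - k + 1) := by
  rcases lt_trichotomy k 0 with hk | hk | hk
  · rw [genBinom_neg x hk, genBinom_neg x (by omega)]; simp
  · subst hk; rw [genBinom_neg x (show (0:ℤ)-1 < 0 by norm_num)]; simp
  · obtain ⟨t, rfl⟩ : ∃ t : ℕ, k = (t : ℤ) + 1 := ⟨(k - 1).toNat, by omega⟩
    have h1 : ((t : ℤ) + 1).toNat = t + 1 := by omega
    have h2 : ((t : ℤ) + 1 - 1).toNat = t := by omega
    rw [genBinom, genBinom, if_pos (by omega), if_pos (by omega), h1, h2]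
    rw [ascPochhammer_succ_left, eval_mul, eval_comp]
    simp only [eval_X, eval_add, eval_one]
    have hf : ((t+1).factorial : ℚ) = (t+1) * t.factorial := by
      rw [Nat.factorial_succ]; push_cast; ring
    have h3 : (t.factorial : ℚ) ≠ 0 := by exact_mod_cast t.factorial_ne_zero
    field_simp [hf]
    push_cast
    rw [hf]; ring

-- G2: top reduction
lemma genBinom_top (x : ℚ) (k : ℤ) :
    genBinom x k * (x - k) = genBinom (x - 1) k * x := by
  rcases lt_or_ge k 0 with hk | hk
  · rw [genBinom_neg x hk, genBinom_neg (x-1) hk]; simp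
  · obtain ⟨t, rfl⟩ : ∃ t : ℕ, k = (t : ℤ) := ⟨k.toNat, by omega⟩
    rw [genBinom, genBinom, if_pos hk, if_pos hk, Int.toNat_natCast]
    have key : (x - t) * (ascPochhammer ℚ t).eval (x - t + 1)
        = (ascPochhammer ℚ t).eval (x - t) * x := by
      have h1 := ascPochhammer_succ_left ℚ t
      have h2 := ascPochhammer_succ_right ℚ t
      have e1 : (ascPochhammer ℚ (t+1)).eval (x - t) =
          (x - t) * (ascPochhammer ℚ t).eval (x - t + 1) := by
        rw [h1, eval_mul, eval_comp]; simp
      have e2 : (ascPochhammer ℚ (t+1)).eval (x - t) =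
          (ascPochhammer ℚ t).eval (x - t) * x := by
        rw [h2, eval_mul]; simp only [eval_add, eval_X, eval_natCast]; ring
      rw [← e1, e2]
    have h3 : (t.factorial : ℚ) ≠ 0 := by exact_mod_cast t.factorial_ne_zero
    field_simp
    push_cast at key ⊢
    ring_nf at key ⊢
    linarith [key]

lemma trinom (r m : ℕ) (h : m ≤ r) :
    genBinom (1/2) m * genBinom (1/2 - m) ((r:ℤ) - 2*m)
      = genBinom ((r - m : ℕ) : ℚ) (m : ℤ) * genBinom (1/2) (r - m) := by
  have e3 : (r:ℤ) - (m:ℤ) = ((r - m : ℕ) : ℤ) := by omega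
  rw [e3]
  rcases le_or_gt (2*m) r with h2 | h2
  · have e1 : (r:ℤ) - 2*m = ((r - 2*m : ℕ) : ℤ) := by omega
    have e2 : (r - m) - m = r - 2*m := by omega
    rw [e1, genBinom_eq_choose, genBinom_eq_choose, genBinom_eq_choose, genBinom_eq_choose]
    have h5 := Ring.choose_smul_choose ((1:ℚ)/2) (n := r - m) (k := m) (by omega)
    rw [e2] at h5
    rw [Ring.choose_natCast]
    rw [nsmul_eq_mul] at h5
    rw [← h5]
  · rw [genBinom_neg _ (show (r:ℤ) - 2*m < 0 by omega)]
    rw [genBinom_eq_choose (((r-m:ℕ)):ℚ) m, Ring.choose_natCast,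
      Nat.choose_eq_zero_of_lt (by omega)]
    simp

lemma vand (y z : ℚ) (K : ℕ) (q : ℤ) (hq : q ≤ K) :
    genBinom (y + z) q = ∑ i ∈ range (K+1), genBinom y i * genBinom z (q - i) := by
  rcases lt_or_ge q 0 with hq0 | hq0
  · rw [genBinom_neg _ hq0]
    refine (Finset.sum_eq_zero fun i _ => ?_).symm
    rw [genBinom_neg z (by omega)]; ring
  · obtain ⟨nn, rfl⟩ : ∃ nn : ℕ, q = (nn : ℤ) := ⟨q.toNat, by omega⟩
    have hnK : nn ≤ K := by exact_mod_cast hq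
    rw [genBinom_eq_choose, Ring.add_choose_eq nn (Commute.all y z)]
    rw [Finset.Nat.sum_antidiagonal_eq_sum_range_succ_mk]
    rw [← Finset.sum_subset (Finset.range_subset_range.2 (by omega : nn + 1 ≤ K + 1))]
    · refine Finset.sum_congr rfl fun i hi => ?_
      have hi' : i ≤ nn := by simpa [Nat.lt_succ_iff] using hi
      have e : (nn : ℤ) - i = ((nn - i : ℕ) : ℤ) := by omega
      rw [e, genBinom_eq_choose, genBinom_eq_choose]
    · intro i _ hi
      have : (nn : ℤ) - i < 0 := by
        simp only [Finset.mem_range, Nat.lt_succ_iff, not_le] at hi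
        omega
      rw [genBinom_neg z this]; ring

noncomputable def gam (m : ℕ) : ℚ := genBinom (1/2) m / 4 ^ m

noncomputable def Tt (r l : ℕ) : ℚ :=
  genBinom (l : ℚ) ((r:ℤ) - (l:ℤ)) * genBinom (1/2) (l : ℤ) * 4 ^ l

lemma Tstep (r l : ℕ) :
    (2*(l:ℚ)+2-r) * (2*(l:ℚ)+1-r) * Tt r (l+1)
      = 2*(1-2*(l:ℚ)) * ((r:ℚ)-(l:ℚ)) * Tt r l := by
  have h1 := genBinom_absorb ((l:ℚ)+1) ((r:ℤ)-(l:ℤ))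
  have h2 := genBinom_top ((l:ℚ)+1) ((r:ℤ)-(l:ℤ))
  have h3 := genBinom_absorb (1/2) ((l:ℤ)+1)
  have e1 : (r:ℤ) - (l:ℤ) - 1 = (r:ℤ) - ((l:ℕ)+1:ℕ) := by push_cast; ring
  have e2 : ((l:ℚ)+1) - 1 = (l:ℚ) := by ring
  have e3 : ((l:ℤ)+1 : ℤ) = (((l:ℕ)+1 : ℕ) : ℤ) := by push_cast; ring
  have e4 : (l:ℤ) + 1 - 1 = (l:ℤ) := by ring
  rw [e1] at h1
  rw [e2] at h2
  rw [e4] at h3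
  rw [e3] at h3
  simp only [Tt]
  push_cast at h1 h2 h3 ⊢
  linear_combination
    (-(2*(l:ℚ)+1-r) * genBinom (1/2) ((l:ℤ)+1) * 4^(l+1)) * h1
    + (((r:ℚ)-l) * genBinom (1/2) ((l:ℤ)+1) * 4^(l+1)) * h2
    + (((r:ℚ)-l) * genBinom (l:ℚ) ((r:ℤ)-(l:ℤ)) * 4^(l+1)) * h3

lemma Tsum (r : ℕ) (hr : 2 ≤ r) : ∀ l, l ≤ r →
    (r:ℚ) * ((r:ℚ)-1) * (∑ i ∈ range (l+1), Tt r i)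
      = 2*((r:ℚ)-(l:ℚ))*(2*(l:ℚ)-1) * Tt r l := by
  intro l
  induction l with
  | zero =>
    intro _
    have h0 : Tt r 0 = 0 := by
      simp only [Tt, Nat.cast_zero, sub_zero]
      rw [genBinom_eq_choose, Ring.choose_zero_pos ℚ (by omega : 0 < r)]
      ring
    rw [Finset.sum_range_one, h0]
    ring
  | succ l ih =>
    intro hl
    have hst := Tstep r l
    have ihl := ih (by omega)
    rw [Finset.sum_range_succ]
    push_cast at *
    linear_combination ihl + hst

lemma Tsum_total (r : ℕ) (hr : 2 ≤ r) : ∑ i ∈ range (r+1), Tt r i = 0 := by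
  have h := Tsum r hr r le_rfl
  have hne : (r:ℚ) * ((r:ℚ)-1) ≠ 0 := by
    have : (2:ℚ) ≤ (r:ℚ) := by exact_mod_cast hr
    intro hc
    rcases mul_eq_zero.1 hc with h | h <;> nlinarith
  have : 2*((r:ℚ)-(r:ℚ))*(2*(r:ℚ)-1) * Tt r r = 0 := by ring
  rw [this] at h
  exact (mul_eq_zero.1 h).resolve_left hne

lemma gam_zero : gam 0 = 1 := by
  simp [gam, genBinom_zero]

lemma Hsum (N : ℕ) (r : ℤ) (h0 : 0 ≤ r) (h2 : r < 2*N) :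
    ∑ m ∈ range N, gam m * genBinom (1/2 - m) (r - 2*m)
      = if r = 0 then 1 else if r = 1 then 1/2 else 0 := by
  obtain ⟨rr, rfl⟩ : ∃ rr : ℕ, r = (rr : ℤ) := ⟨r.toNat, by omega⟩
  set f : ℕ → ℚ := fun m => gam m * genBinom (1/2 - m) ((rr:ℤ) - 2*m) with hf
  have hvan : ∀ m : ℕ, (rr:ℤ) < 2*(m:ℤ) → f m = 0 := by
    intro m hm
    simp only [hf]
    rw [genBinom_neg _ (by omega)]
    ring
  have hstep : ∑ m ∈ range N, f m = ∑ m ∈ range (rr+1), f m := by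
    have hA : ∑ m ∈ range N, f m = ∑ m ∈ range (max N (rr+1)), f m := by
      refine Finset.sum_subset (Finset.range_subset_range.2 (le_max_left _ _)) ?_
      intro m _ hm
      simp only [Finset.mem_range, not_lt] at hm
      exact hvan m (by omega)
    have hB : ∑ m ∈ range (rr+1), f m = ∑ m ∈ range (max N (rr+1)), f m := by
      refine Finset.sum_subset (Finset.range_subset_range.2 (le_max_right _ _)) ?_
      intro m _ hm
      simp only [Finset.mem_range, not_lt] at hm
      exact hvan m (by omega)
    rw [hA, hB]
  rw [hstep]
  have genBinom_half_one : genBinom (1/2 : ℚ) (1:ℤ) = 1/2 := by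
    rw [show (1:ℤ) = ((1:ℕ):ℤ) by norm_num, genBinom_eq_choose, Ring.choose_one_right]
  rcases Nat.lt_or_ge rr 2 with hrr | hrr
  · interval_cases rr
    · -- rr = 0
      rw [Finset.sum_range_one]
      simp only [hf]
      norm_num [gam_zero, genBinom_zero]
    · -- rr = 1
      rw [Finset.sum_range_succ, Finset.sum_range_one]
      simp only [hf]
      norm_num [gam_zero, genBinom_half_one, genBinom_neg (-(1/2):ℚ) (show (-1:ℤ) < 0 by norm_num)]
  · -- rr ≥ 2
    have hEq : ∀ m ∈ range (rr+1), f m = (1/(4:ℚ)^rr) * Tt rr (rr - m) := by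
      intro m hm
      have hmr : m ≤ rr := by simpa [Nat.lt_succ_iff] using hm
      have ht := trinom rr m hmr
      have e1 : (rr:ℤ) - ((rr - m : ℕ):ℤ) = (m:ℤ) := by omega
      have e2 : (rr:ℤ) - (m:ℤ) = ((rr - m : ℕ):ℤ) := by omega
      simp only [hf, gam, Tt, e1]
      rw [e2] at ht
      rw [div_mul_eq_mul_div, ht]
      have h4 : ((4:ℚ)^rr) = 4^(rr-m) * 4^m := by
        rw [← pow_add]
        congr 1
        omega
      rw [h4]
      have : ((4:ℚ)^m) ≠ 0 := by positivity
      field_simp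
    rw [Finset.sum_congr rfl hEq, ← Finset.mul_sum]
    have hrefl : ∑ m ∈ range (rr+1), Tt rr (rr - m) = ∑ l ∈ range (rr+1), Tt rr l := by
      have := Finset.sum_range_reflect (fun l => Tt rr l) (rr+1)
      simpa using this
    rw [hrefl, Tsum_total rr hrr]
    have : ¬ ((rr:ℤ) = 0) := by omega
    have h1 : ¬ ((rr:ℤ) = 1) := by omega
    simp [this, h1]; omega

lemma key (x : ℚ) (k : ℤ) (N : ℕ) (hk : k < 2*N) :
    ∑ m ∈ range N, gam m * genBinom (x - 1/2 - m) (k - 2*m)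
      = genBinom (x-1) k + (1/2) * genBinom (x-1) (k-1) := by
  rcases lt_or_ge k 0 with hk0 | hk0
  · rw [genBinom_neg _ hk0, genBinom_neg _ (by omega)]
    rw [Finset.sum_eq_zero]
    · ring
    · intro m _
      rw [genBinom_neg _ (by omega)]
      ring
  · obtain ⟨K, rfl⟩ : ∃ K : ℕ, k = (K : ℤ) := ⟨k.toNat, by omega⟩
    have step1 : ∀ m ∈ range N,
        gam m * genBinom (x - 1/2 - m) ((K:ℤ) - 2*m)
          = ∑ i ∈ range (K+1), genBinom (x-1) i *
              (gam m * genBinom (1/2 - m) (((K:ℤ) - i) - 2*m)) := by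
      intro m _
      have e : x - 1/2 - m = (x - 1) + (1/2 - m) := by ring
      rw [e, vand (x-1) (1/2 - m) K ((K:ℤ) - 2*m) (by omega)]
      rw [Finset.mul_sum]
      refine Finset.sum_congr rfl fun i _ => ?_
      have e2 : (K:ℤ) - 2*m - i = ((K:ℤ) - i) - 2*m := by ring
      rw [e2]
      ring
    rw [Finset.sum_congr rfl step1, Finset.sum_comm]
    have step2 : ∀ i ∈ range (K+1),
        ∑ m ∈ range N, genBinom (x-1) i * (gam m * genBinom (1/2 - m) (((K:ℤ) - i) - 2*m))
          = genBinom (x-1) i *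
              (if ((K:ℤ) - i) = 0 then 1 else if ((K:ℤ) - i) = 1 then (1/2:ℚ) else 0) := by
      intro i hi
      have hi' : i ≤ K := by simpa [Nat.lt_succ_iff] using hi
      rw [← Finset.mul_sum, Hsum N ((K:ℤ) - i) (by omega) (by omega)]
    rw [Finset.sum_congr rfl step2]
    rcases Nat.eq_zero_or_pos K with hK | hK
    · subst hK
      rw [Finset.sum_range_one]
      rw [genBinom_neg (x-1) (show ((0:ℕ):ℤ) - 1 < 0 by norm_num)]
      norm_num
    · obtain ⟨K', rfl⟩ : ∃ K', K = K' + 1 := ⟨K - 1, by omega⟩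
      have step3 : ∀ i ∈ range (K'+1+1),
          genBinom (x-1) i *
              (if (((K'+1:ℕ):ℤ) - i) = 0 then 1 else if (((K'+1:ℕ):ℤ) - i) = 1 then (1/2:ℚ) else 0)
            = (if i = K'+1 then genBinom (x-1) (((K'+1:ℕ):ℤ)) else 0)
              + (if i = K' then (1/2) * genBinom (x-1) (((K'+1:ℕ):ℤ) - 1) else 0) := by
        intro i hi
        have hi' : i ≤ K'+1 := by simpa [Nat.lt_succ_iff] using hi
        by_cases h1 : i = K'+1
        · subst h1
          rw [if_pos (by omega : ((K'+1:ℕ):ℤ) - ((K'+1:ℕ):ℤ) = 0)]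
          rw [if_pos rfl, if_neg (by omega)]
          ring
        · by_cases h2 : i = K'
          · rw [if_neg (show ¬ (((K'+1:ℕ):ℤ) - (i:ℕ) = 0) by omega),
              if_pos (show ((K'+1:ℕ):ℤ) - (i:ℕ) = 1 by omega),
              if_neg h1, if_pos h2, h2]
            have e : ((K'+1:ℕ):ℤ) - 1 = ((K':ℕ):ℤ) := by omega
            rw [e]
            ring
          · rw [if_neg (by omega : ¬ (((K'+1:ℕ):ℤ) - (i:ℕ) = 0)),
              if_neg (by omega : ¬ (((K'+1:ℕ):ℤ) - (i:ℕ) = 1)),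
              if_neg h1, if_neg h2]
            ring
      rw [Finset.sum_congr rfl step3, Finset.sum_add_distrib,
        Finset.sum_ite_eq' (range (K'+1+1)) (K'+1)
          (fun _ => genBinom (x-1) (((K'+1:ℕ):ℤ))),
        Finset.sum_ite_eq' (range (K'+1+1)) K'
          (fun _ => (1/2) * genBinom (x-1) (((K'+1:ℕ):ℤ) - 1))]
      rw [if_pos (by simp), if_pos (by simp [Nat.lt_succ_iff])]

noncomputable def Gmat (N : ℕ) : Matrix (Fin N) (Fin N) ℚ :=
  fun p q => if (p:ℕ) ≤ (q:ℕ) then gam ((q:ℕ) - (p:ℕ)) else 0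

lemma Gmat_det (N : ℕ) : (Gmat N).det = 1 := by
  have ht : (Gmat N).BlockTriangular id := by
    intro p q h
    have : (q:ℕ) < (p:ℕ) := h
    simp [Gmat, not_le.2 this]
  rw [Matrix.det_of_upperTriangular ht]
  simp [Gmat, gam_zero]

lemma colsum (N jn : ℕ) (hj : jn < N) (x : ℚ) (k : ℤ) (hk : k < 2*((jn:ℤ)+1))
    (f : ℕ → ℚ) (hf : ∀ q, f q = genBinom (x - 1/2 + (q:ℚ) - (jn:ℚ)) (k + 2*(q:ℤ) - 2*(jn:ℤ))) :
    ∑ q ∈ range N, f q * (if q ≤ jn then gam (jn - q) else 0)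
      = genBinom (x-1) k + (1/2) * genBinom (x-1) (k-1) := by
  have h1 : ∑ q ∈ range N, f q * (if q ≤ jn then gam (jn - q) else 0)
      = ∑ q ∈ range (jn+1), f q * gam (jn - q) := by
    rw [← Finset.sum_subset (Finset.range_subset_range.2 (by omega : jn + 1 ≤ N))]
    · refine Finset.sum_congr rfl fun q hq => ?_
      have : q ≤ jn := by simpa [Nat.lt_succ_iff] using hq
      rw [if_pos this]
    · intro q _ hq
      have : ¬ q ≤ jn := by
        simp only [Finset.mem_range, Nat.lt_succ_iff] at hq
        exact hq
      rw [if_neg this, mul_zero]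
  rw [h1]
  have h2 : ∑ q ∈ range (jn+1), f q * gam (jn - q)
      = ∑ m ∈ range (jn+1), gam m * genBinom (x - 1/2 - m) (k - 2*m) := by
    rw [← Finset.sum_range_reflect (fun q => f q * gam (jn - q)) (jn+1)]
    refine Finset.sum_congr rfl fun m hm => ?_
    have hmj : m ≤ jn := by simpa [Nat.lt_succ_iff] using hm
    have e1 : jn + 1 - 1 - m = jn - m := by omega
    have e2 : jn - (jn - m) = m := by omega
    rw [e1, e2, hf (jn - m), mul_comm]
    congr 2
    · rw [Nat.cast_sub hmj]; ring
    · rw [Nat.cast_sub hmj]; ring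
  rw [h2]
  exact key x k (jn+1) (by push_cast at hk ⊢; omega)

lemma entry_eq (N jn : ℕ) (hj : jn < N) (x : ℚ) (k : ℤ) (hk : k < 2*((jn:ℤ)+1))
    (F G : Fin N → ℚ)
    (hF : ∀ q : Fin N, F q = genBinom (x - 1/2 + ((q:ℕ):ℚ) - (jn:ℚ))
      (k + 2*((q:ℕ):ℤ) - 2*(jn:ℤ)))
    (hG : ∀ q : Fin N, G q = if (q:ℕ) ≤ jn then gam (jn - (q:ℕ)) else 0) :
    ∑ q : Fin N, F q * G q = genBinom (x-1) k + (1/2) * genBinom (x-1) (k-1) := by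
  have h : ∑ q : Fin N, F q * G q
      = ∑ q ∈ range N, (fun qq : ℕ => genBinom (x - 1/2 + (qq:ℚ) - (jn:ℚ))
          (k + 2*(qq:ℤ) - 2*(jn:ℤ)) * (if qq ≤ jn then gam (jn - qq) else 0)) q := by
    rw [← Fin.sum_univ_eq_sum_range]
    exact Finset.sum_congr rfl fun q _ => by rw [hF q, hG q]
  rw [h]
  exact colsum N jn hj x k hk _ (fun q => rfl)

lemma factorizationM (b n : ℕ) (u : ℕ → ℤ)
    (hub : ∀ i, 1 ≤ i → i ≤ n → u i ≤ (b : ℤ) + 2 * n) (a : ℚ) :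
    MbarMat b n u a = MMat b n u (a - 1/2) * Gmat (b+n) := by
  funext i j
  rw [Matrix.mul_apply]
  by_cases hip : ((i : ℕ) + 1 : ℤ) ≤ (b : ℤ)
  · have hent := entry_eq (b+n) (j:ℕ) j.isLt
      (a + (n : ℚ) + (((j : ℕ) : ℚ) + 1))
      (2 * (((j : ℕ) : ℤ) + 1) - 1 - (b : ℤ) + (((i : ℕ) : ℤ) + 1))
      (by omega)
      (fun q => MMat b n u (a - 1/2) i q) (fun q => Gmat (b+n) q j)
      (fun q => by
        simp only [MMat, if_pos hip]
        congr 1 <;> push_cast <;> ring)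
      (fun q => rfl)
    rw [hent]
    simp only [MbarMat, if_pos hip]
  · have hs1 : 1 ≤ (i:ℕ) + 1 - b := by omega
    have hs2 : (i:ℕ) + 1 - b ≤ n := by have := i.isLt; omega
    have hu := hub ((i:ℕ) + 1 - b) hs1 hs2
    have hent := entry_eq (b+n) (j:ℕ) j.isLt
      (a + ((u ((i : ℕ) + 1 - b) : ℤ) : ℚ) - (b : ℚ) - (n : ℚ) + (((j : ℕ) : ℚ) + 1) - 1)
      (2 * (((j : ℕ) : ℤ) + 1) - 1 - 2 * (b : ℤ) - 2 * (n : ℤ) + u ((i : ℕ) + 1 - b))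
      (by omega)
      (fun q => MMat b n u (a - 1/2) i q) (fun q => Gmat (b+n) q j)
      (fun q => by
        simp only [MMat, if_neg hip]
        congr 1 <;> push_cast <;> ring)
      (fun q => rfl)
    rw [hent]
    simp only [MbarMat, if_neg hip]

/-- the entries of `M_{b,n,u}` and `M̄_{b,n,u}` are polynomial functions
of `a`, and as an identity of polynomials in `a` — equivalently, for every rational
value of `a` — the weighted and unweighted tiling functions satisfy
`det M̄_{b,n,u}(a) = det M_{b,n,u}(a - 1/2)`. -/
theorem weighted_equals_shifted_unweighted (b n : ℕ) (u : ℕ → ℤ)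
    (hmono : ∀ i j, 1 ≤ i → i < j → j ≤ n → u i < u j)
    (hlb : ∀ i, 1 ≤ i → i ≤ n → 1 ≤ u i)
    (hub : ∀ i, 1 ≤ i → i ≤ n → u i ≤ (b : ℤ) + 2 * n)
    (hdents : ∀ i, 1 ≤ i → i ≤ n → 2 * (i : ℤ) ≤ u i) :
    ∀ a : ℚ, (MbarMat b n u a).det = (MMat b n u (a - 1 / 2)).det := by
  intro a
  rw [factorizationM b n u hub a, Matrix.det_mul, Gmat_det, mul_one]
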